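/- Let D be a Bayesian network distribution on {0,1}^n with induced basis functions φ_S. Then for any two distinct subsets S ≠ T of [n], E_{X∼D}[φ_S(X) φ_T(X)] = 0. Consequently the 2^n functions {φ_S : S ⊆ [n]} form an orthonormal family with respect to the inner product ⟨f,g⟩ = E_{X∼D}[f(X)g(X)]. -/
import Mathlib


/-!
A Bayesian network (BN) distribution on {0,1}^n: a DAG on [n] (encoded by parent
sets together with a rank function witnessing acyclicity) and, for each node `v`,
a conditional probability `cond v x ∈ (0,1)` of `X_v = 1` given the parent values,
depending only on the coordinates in `pa v`.  The joint distribution is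
`prob x = ∏ v, P(x_v | x_{pa v})`, and the BN-induced basis functions are
`φ_v(x) = (x_v − μ_{v,x_pa(v)})/σ_{v,x_pa(v)}`, `φ_S = ∏_{v∈S} φ_v`.
-/

open Finset

noncomputable section

/-- Interpret a Boolean as a real number (`true ↦ 1`, `false ↦ 0`). -/
def b2r (b : Bool) : ℝ := if b then 1 else 0

/-- A Bayesian network distribution on `{0,1}^n`. -/
structure BayesNet (n : ℕ) where
  /-- parent set of each node -/
  pa : Fin n → Finset (Fin n)
  /-- the parent relation is acyclic (a DAG) -/
  acyclic : ∃ rank : Fin n → ℕ, ∀ v u, u ∈ pa v → rank u < rank v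
  /-- `cond v x = P(X_v = 1 | X_{pa v} = x_{pa v})` -/
  cond : Fin n → (Fin n → Bool) → ℝ
  /-- the conditional probability of `v` depends only on the parents of `v` -/
  cond_local : ∀ v x y, (∀ u ∈ pa v, x u = y u) → cond v x = cond v y
  cond_pos : ∀ v x, 0 < cond v x
  cond_lt_one : ∀ v x, cond v x < 1

namespace BayesNet

variable {n : ℕ}

/-- The joint probability mass function `D(x) = ∏_v P(x_v | x_{pa v})`. -/
def prob (B : BayesNet n) (x : Fin n → Bool) : ℝ :=
  ∏ v, if x v then B.cond v x else 1 - B.cond v x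

/-- Conditional standard deviation `σ_{v, x_{pa v}}`. -/
def sigma (B : BayesNet n) (v : Fin n) (x : Fin n → Bool) : ℝ :=
  Real.sqrt (B.cond v x * (1 - B.cond v x))

/-- BN-induced basis function of a single node. -/
def phi (B : BayesNet n) (v : Fin n) (x : Fin n → Bool) : ℝ :=
  (b2r (x v) - B.cond v x) / B.sigma v x

/-- BN-induced basis function `φ_S = ∏_{v ∈ S} φ_v` (with `φ_∅ ≡ 1`). -/
def phiS (B : BayesNet n) (S : Finset (Fin n)) (x : Fin n → Bool) : ℝ :=
  ∏ v ∈ S, B.phi v x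

/-- Expectation with respect to the BN distribution. -/
def expect (B : BayesNet n) (g : (Fin n → Bool) → ℝ) : ℝ :=
  ∑ x, B.prob x * g x

/-- Fourier coefficient `f̂_S = E_D[f(X) φ_S(X)]`. -/
def coeff (B : BayesNet n) (f : (Fin n → Bool) → ℝ) (S : Finset (Fin n)) : ℝ :=
  B.expect fun x => f x * B.phiS S x

/-- Conditional expectation `E[g(X) | X_u = y_u for all u ∈ A]`. -/
def condExp (B : BayesNet n) (g : (Fin n → Bool) → ℝ) (A : Finset (Fin n))
    (y : Fin n → Bool) : ℝ :=
  (∑ x ∈ univ.filter (fun x : Fin n → Bool => ∀ u ∈ A, x u = y u), B.prob x * g x) /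
  (∑ x ∈ univ.filter (fun x : Fin n → Bool => ∀ u ∈ A, x u = y u), B.prob x)

/-- The union of the parent sets of the nodes of `S`. -/
def paS (B : BayesNet n) (S : Finset (Fin n)) : Finset (Fin n) := S.biUnion B.pa

/-- Spectral norm `L1(f) = Σ_S |f̂_S|`. -/
def L1 (B : BayesNet n) (f : (Fin n → Bool) → ℝ) : ℝ :=
  ∑ S : Finset (Fin n), |B.coeff f S|

end BayesNet

namespace BayesNet

variable {n : ℕ}

/-- The single-node factor of the joint pmf. -/
def pf (B : BayesNet n) (u : Fin n) (x : Fin n → Bool) : ℝ :=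
  if x u then B.cond u x else 1 - B.cond u x

lemma prob_eq_prod_pf (B : BayesNet n) (x : Fin n → Bool) :
    B.prob x = ∏ v, B.pf v x := rfl

lemma sigma_pos (B : BayesNet n) (v : Fin n) (x : Fin n → Bool) :
    0 < B.sigma v x := by
  have h1 := B.cond_pos v x
  have h2 := B.cond_lt_one v x
  exact Real.sqrt_pos.2 (mul_pos h1 (by linarith))

lemma sigma_sq (B : BayesNet n) (v : Fin n) (x : Fin n → Bool) :
    B.sigma v x ^ 2 = B.cond v x * (1 - B.cond v x) := by
  have h1 := B.cond_pos v x
  have h2 := B.cond_lt_one v x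
  rw [sigma, Real.sq_sqrt (by nlinarith)]

lemma cond_update (B : BayesNet n) {v u : Fin n} (hv : v ∉ B.pa u)
    (x : Fin n → Bool) (b : Bool) :
    B.cond u (Function.update x v b) = B.cond u x :=
  B.cond_local u _ _ (fun w hw => Function.update_of_ne (by rintro rfl; exact hv hw) _ _)

lemma sigma_update (B : BayesNet n) {v u : Fin n} (hv : v ∉ B.pa u)
    (x : Fin n → Bool) (b : Bool) :
    B.sigma u (Function.update x v b) = B.sigma u x := by
  rw [sigma, B.cond_update hv, sigma]

lemma pf_update (B : BayesNet n) {v u : Fin n} (hv : v ∉ B.pa u) (hne : u ≠ v)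
    (x : Fin n → Bool) (b : Bool) :
    B.pf u (Function.update x v b) = B.pf u x := by
  rw [pf, pf, Function.update_of_ne hne, B.cond_update hv]

lemma phi_update (B : BayesNet n) {v u : Fin n} (hv : v ∉ B.pa u) (hne : u ≠ v)
    (x : Fin n → Bool) (b : Bool) :
    B.phi u (Function.update x v b) = B.phi u x := by
  rw [phi, phi, Function.update_of_ne hne, B.cond_update hv, B.sigma_update hv]

lemma sum_pair (v : Fin n) (f : (Fin n → Bool) → ℝ) :
    ∑ x : Fin n → Bool, f x =
      ∑ x ∈ univ.filter (fun x : Fin n → Bool => x v = false),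
        (f x + f (Function.update x v true)) := by
  have hsplit := Finset.sum_filter_add_sum_filter_not univ
    (fun x : Fin n → Bool => x v = false) f
  rw [Finset.sum_add_distrib, ← hsplit]
  congr 1
  refine Finset.sum_nbij' (fun x => Function.update x v false)
    (fun x => Function.update x v true) ?_ ?_ ?_ ?_ ?_
  · intro a _
    simp
  · intro a _
    simp
  · intro a ha
    have ha' : a v = true := by
      simp only [mem_filter, mem_univ, true_and] at ha
      simpa using ha
    funext w
    by_cases hw : w = v
    · subst hw; simp [ha']
    · simp [Function.update_of_ne hw]
  · intro a ha
    have ha' : a v = false := by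
      simp only [mem_filter, mem_univ, true_and] at ha
      exact ha
    funext w
    by_cases hw : w = v
    · subst hw; simp [ha']
    · simp [Function.update_of_ne hw]
  · intro a ha
    have ha' : a v = true := by
      simp only [mem_filter, mem_univ, true_and] at ha
      simpa using ha
    congr 1
    funext w
    by_cases hw : w = v
    · subst hw; simp [ha']
    · simp [Function.update_of_ne hw]

lemma half_sum (v : Fin n) (g : (Fin n → Bool) → ℝ)
    (hg : ∀ x b, g (Function.update x v b) = g x) :
    ∑ x ∈ univ.filter (fun x : Fin n → Bool => x v = false), g x
      = (∑ x : Fin n → Bool, g x) / 2 := by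
  rw [sum_pair v g]
  rw [Finset.sum_add_distrib]
  have : ∀ x ∈ univ.filter (fun x : Fin n → Bool => x v = false),
      g (Function.update x v true) = g x := fun x _ => hg x true
  rw [Finset.sum_congr rfl this]
  ring

lemma phiS_erase (B : BayesNet n) (S : Finset (Fin n)) (v : Fin n)
    (x : Fin n → Bool) :
    B.phiS S x = (if v ∈ S then B.phi v x else 1) * B.phiS (S.erase v) x := by
  by_cases h : v ∈ S
  · rw [if_pos h, phiS, phiS, ← Finset.mul_prod_erase S _ h]
  · rw [if_neg h, one_mul, Finset.erase_eq_of_notMem h]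

lemma aux_orth (B : BayesNet n) (V : Finset (Fin n)) :
    (∀ v ∈ V, B.pa v ⊆ V) → ∀ S T : Finset (Fin n), S ⊆ V → T ⊆ V →
    ∑ x : Fin n → Bool,
        (∏ u ∈ V, B.pf u x) * (B.phiS S x * B.phiS T x)
      = (if S = T then 1 else 0) * 2 ^ (n - V.card) := by
  induction V using Finset.strongInduction with
  | _ V ih =>
    intro hclosed S T hS hT
    obtain ⟨rank, hrank⟩ := B.acyclic
    rcases V.eq_empty_or_nonempty with rfl | hVne
    · have hS0 : S = ∅ := Finset.subset_empty.1 hS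
      have hT0 : T = ∅ := Finset.subset_empty.1 hT
      subst hS0; subst hT0
      simp only [Finset.prod_empty, phiS, one_mul, mul_one, Finset.card_empty,
        Nat.sub_zero, if_pos rfl]
      rw [Finset.sum_const]
      simp [Finset.card_univ]
    · obtain ⟨v, hvV, hmax⟩ := V.exists_max_image rank hVne
      have hnp : ∀ u ∈ V, v ∉ B.pa u := fun u hu h =>
        absurd (hmax u hu) (not_le.2 (hrank u v h))
      have hvv : v ∉ B.pa v := hnp v hvV
      -- invariance of the "rest" under flipping coordinate v
      have hPR : ∀ (x : Fin n → Bool) (b : Bool),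
          ∏ u ∈ V.erase v, B.pf u (Function.update x v b)
            = ∏ u ∈ V.erase v, B.pf u x := by
        intro x b
        refine Finset.prod_congr rfl fun u hu => ?_
        exact B.pf_update (hnp u (Finset.mem_of_mem_erase hu))
          (Finset.ne_of_mem_erase hu) x b
      have hΦ : ∀ (W : Finset (Fin n)), W ⊆ V → ∀ (x : Fin n → Bool) (b : Bool),
          B.phiS (W.erase v) (Function.update x v b) = B.phiS (W.erase v) x := by
        intro W hW x b
        refine Finset.prod_congr rfl fun u hu => ?_
        exact B.phi_update (hnp u (hW (Finset.mem_of_mem_erase hu)))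
          (Finset.ne_of_mem_erase hu) x b
      -- values at v
      have hpfv : ∀ x : Fin n → Bool, x v = false → B.pf v x = 1 - B.cond v x := by
        intro x hx; rw [pf, hx]; simp
      have hpfv' : ∀ x : Fin n → Bool,
          B.pf v (Function.update x v true) = B.cond v x := by
        intro x
        rw [pf, Function.update_self, if_pos rfl, B.cond_update hvv]
      have hphiv : ∀ x : Fin n → Bool, x v = false →
          B.phi v x = (0 - B.cond v x) / B.sigma v x := by
        intro x hx; rw [phi, hx]; simp [b2r]
      have hphiv' : ∀ x : Fin n → Bool,
          B.phi v (Function.update x v true) = (1 - B.cond v x) / B.sigma v x := by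
        intro x
        rw [phi, Function.update_self, B.cond_update hvv, B.sigma_update hvv]
        simp [b2r]
      -- abbreviation for the reduced integrand
      set R : (Fin n → Bool) → ℝ := fun x =>
        (∏ u ∈ V.erase v, B.pf u x) *
          (B.phiS (S.erase v) x * B.phiS (T.erase v) x) with hR
      have hRinv : ∀ x b, R (Function.update x v b) = R x := by
        intro x b
        simp only [hR]
        rw [hPR x b, hΦ S hS x b, hΦ T hT x b]
      -- facts for the inductive step
      have hVsub : V.erase v ⊂ V := Finset.erase_ssubset hvV
      have hclosed' : ∀ u ∈ V.erase v, B.pa u ⊆ V.erase v := by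
        intro u hu w hw
        have huV := Finset.mem_of_mem_erase hu
        refine Finset.mem_erase.2 ⟨fun h => hnp u huV (h ▸ hw), hclosed u huV hw⟩
      have hcard1 : 1 ≤ V.card := Finset.card_pos.2 hVne
      have hcardn : V.card ≤ n := by
        have := Finset.card_le_univ V
        simpa using this
      have hcarder : (V.erase v).card = V.card - 1 := Finset.card_erase_of_mem hvV
      have hpow : n - (V.card - 1) = (n - V.card) + 1 := by omega
      have hsumR : ∑ x ∈ univ.filter (fun x : Fin n → Bool => x v = false), R x
          = (if S.erase v = T.erase v then 1 else 0) * 2 ^ (n - V.card) := by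
        rw [half_sum v R hRinv]
        rw [ih (V.erase v) hVsub hclosed' (S.erase v) (T.erase v)
          (Finset.erase_subset_erase v hS) (Finset.erase_subset_erase v hT)]
        rw [hcarder, hpow, pow_succ]
        ring
      -- decompose the integrand at a point with x v = false
      have hdecomp : ∀ x : Fin n → Bool, x v = false →
          (∏ u ∈ V, B.pf u x) * (B.phiS S x * B.phiS T x) +
          (∏ u ∈ V, B.pf u (Function.update x v true)) *
            (B.phiS S (Function.update x v true) *
             B.phiS T (Function.update x v true))
          = ((1 - B.cond v x) *
              ((if v ∈ S then (0 - B.cond v x) / B.sigma v x else 1) *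
               (if v ∈ T then (0 - B.cond v x) / B.sigma v x else 1)) +
             B.cond v x *
              ((if v ∈ S then (1 - B.cond v x) / B.sigma v x else 1) *
               (if v ∈ T then (1 - B.cond v x) / B.sigma v x else 1))) * R x := by
        intro x hx
        have e1 : ∏ u ∈ V, B.pf u x
            = B.pf v x * ∏ u ∈ V.erase v, B.pf u x :=
          (Finset.mul_prod_erase V _ hvV).symm
        have e2 : ∏ u ∈ V, B.pf u (Function.update x v true)
            = B.cond v x * ∏ u ∈ V.erase v, B.pf u x := by
          rw [← Finset.mul_prod_erase V _ hvV, hpfv' x, hPR x true]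
        rw [e1, e2, hpfv x hx,
          B.phiS_erase S v x, B.phiS_erase T v x,
          B.phiS_erase S v (Function.update x v true),
          B.phiS_erase T v (Function.update x v true),
          hΦ S hS x true, hΦ T hT x true, hphiv' x, hphiv x hx]
        simp only [hR]
        ring
      rw [sum_pair v]
      rw [Finset.sum_congr rfl (fun x hx => hdecomp x
        (by simpa using (Finset.mem_filter.1 hx).2))]
      by_cases hvS : v ∈ S <;> by_cases hvT : v ∈ T
      · -- v ∈ S, v ∈ T : bracket is 1
        have hK : ∀ x : Fin n → Bool,
            ((1 - B.cond v x) *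
              ((if v ∈ S then (0 - B.cond v x) / B.sigma v x else 1) *
               (if v ∈ T then (0 - B.cond v x) / B.sigma v x else 1)) +
             B.cond v x *
              ((if v ∈ S then (1 - B.cond v x) / B.sigma v x else 1) *
               (if v ∈ T then (1 - B.cond v x) / B.sigma v x else 1))) = 1 := by
          intro x
          have hσ2 := B.sigma_sq v x
          have hσ := (B.sigma_pos v x).ne'
          simp only [if_pos hvS, if_pos hvT]
          field_simp
          nlinarith [hσ2]
        rw [Finset.sum_congr rfl (fun x _ => by rw [hK x, one_mul])]
        rw [hsumR]
        have hiff : (S.erase v = T.erase v) ↔ (S = T) := by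
          constructor
          · intro h
            rw [← Finset.insert_erase hvS, ← Finset.insert_erase hvT, h]
          · intro h; rw [h]
        by_cases h : S = T
        · rw [if_pos h, if_pos (hiff.2 h)]
        · rw [if_neg h, if_neg (fun hh => h (hiff.1 hh))]
      · -- v ∈ S, v ∉ T : bracket is 0
        have hK : ∀ x : Fin n → Bool,
            ((1 - B.cond v x) *
              ((if v ∈ S then (0 - B.cond v x) / B.sigma v x else 1) *
               (if v ∈ T then (0 - B.cond v x) / B.sigma v x else 1)) +
             B.cond v x *
              ((if v ∈ S then (1 - B.cond v x) / B.sigma v x else 1) *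
               (if v ∈ T then (1 - B.cond v x) / B.sigma v x else 1))) = 0 := by
          intro x
          have hσ := (B.sigma_pos v x).ne'
          simp only [if_pos hvS, if_neg hvT]
          field_simp
          ring
        rw [Finset.sum_congr rfl (fun x _ => by rw [hK x, zero_mul])]
        have hne : S ≠ T := fun h => hvT (h ▸ hvS)
        rw [if_neg hne]
        simp
      · -- v ∉ S, v ∈ T : bracket is 0
        have hK : ∀ x : Fin n → Bool,
            ((1 - B.cond v x) *
              ((if v ∈ S then (0 - B.cond v x) / B.sigma v x else 1) *
               (if v ∈ T then (0 - B.cond v x) / B.sigma v x else 1)) +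
             B.cond v x *
              ((if v ∈ S then (1 - B.cond v x) / B.sigma v x else 1) *
               (if v ∈ T then (1 - B.cond v x) / B.sigma v x else 1))) = 0 := by
          intro x
          have hσ := (B.sigma_pos v x).ne'
          simp only [if_neg hvS, if_pos hvT]
          field_simp
          ring
        rw [Finset.sum_congr rfl (fun x _ => by rw [hK x, zero_mul])]
        have hne : S ≠ T := fun h => hvS (h ▸ hvT)
        rw [if_neg hne]
        simp
      · -- v ∉ S, v ∉ T : bracket is 1
        have hK : ∀ x : Fin n → Bool,
            ((1 - B.cond v x) *
              ((if v ∈ S then (0 - B.cond v x) / B.sigma v x else 1) *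
               (if v ∈ T then (0 - B.cond v x) / B.sigma v x else 1)) +
             B.cond v x *
              ((if v ∈ S then (1 - B.cond v x) / B.sigma v x else 1) *
               (if v ∈ T then (1 - B.cond v x) / B.sigma v x else 1))) = 1 := by
          intro x
          simp only [if_neg hvS, if_neg hvT]
          ring
        rw [Finset.sum_congr rfl (fun x _ => by rw [hK x, one_mul])]
        rw [hsumR, Finset.erase_eq_of_notMem hvS, Finset.erase_eq_of_notMem hvT]
  

end BayesNet

/-- The BN-induced basis functions are orthonormal: for distinct
`S ≠ T`, `E[φ_S φ_T] = 0`, and in general `E[φ_S φ_T] = 1` iff `S = T` (else `0`),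
with respect to the inner product `⟨f,g⟩ = E_D[f g]`. -/
theorem bn_basis_orthonormal {n : ℕ} (B : BayesNet n) :
    (∀ S T : Finset (Fin n), S ≠ T →
      B.expect (fun x => B.phiS S x * B.phiS T x) = 0) ∧
    (∀ S T : Finset (Fin n),
      B.expect (fun x => B.phiS S x * B.phiS T x) = if S = T then 1 else 0) := by
  have key : ∀ S T : Finset (Fin n),
      B.expect (fun x => B.phiS S x * B.phiS T x) = if S = T then 1 else 0 := by
    intro S T
    have h := B.aux_orth Finset.univ (fun v _ => Finset.subset_univ _) S T
      (Finset.subset_univ _) (Finset.subset_univ _)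
    have hcard : (Finset.univ : Finset (Fin n)).card = n := by simp
    rw [hcard, Nat.sub_self, pow_zero, mul_one] at h
    rw [BayesNet.expect, ← h]
    exact Finset.sum_congr rfl fun x _ => by rw [B.prob_eq_prod_pf]
  exact ⟨fun S T hST => by rw [key S T, if_neg hST], key⟩
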